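/- arXiv:1405.2961 — 5 statements merged into one kernel-verified Lean document; each statement's English description precedes it below -/
import Mathlib

section
/- If μ is a hyperbolic (i.e. (-∞)-concave) Radon probability measure on a locally convex Hausdorff real topological vector space E, then for any additive subgroup H of E, the inner measure μ_*(H) = sup{μ(K) : K ⊆ H compact} is either 0 or 1. In particular, any μ-measurable affine subspace of E has μ-measure either 0 or 1. -/
open MeasureTheory Set Pointwise Filter
open scoped ENNReal NNReal Topology

/-- A measure `μ` on a topological vector space is hyperbolic (i.e. `(-∞)`-concave, or
convex) if for all nonempty compact sets `A, B` and all `t ∈ (0,1)`,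
`μ((1-t)•A + t•B) ≥ min(μ(A), μ(B))`. -/
def Hyperbolic {E : Type*} [AddCommMonoid E] [Module ℝ E] [TopologicalSpace E]
    [MeasurableSpace E] (μ : Measure E) : Prop :=
  ∀ A B : Set E, A.Nonempty → B.Nonempty → IsCompact A → IsCompact B →
    ∀ t : ℝ, t ∈ Set.Ioo (0 : ℝ) 1 →
      min (μ A) (μ B) ≤ μ ((1 - t) • A + t • B)

/-- The inner measure `μ_*(S) = sup{μ(K) : K ⊆ S compact}`. -/
noncomputable def innerMeasCompact {E : Type*} [TopologicalSpace E] [MeasurableSpace E]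
    (μ : Measure E) (S : Set E) : ℝ≥0∞ :=
  ⨆ (K : Set E) (_ : IsCompact K) (_ : K ⊆ S), μ K

/-- Key lemma (Borell): if `S` is "`1/q`-extraction-closed", `A ⊆ S` compact of positive
measure and `B ⊆ Sᶜ` compact of positive measure, we reach a contradiction. -/
private lemma borell_key {E : Type*} [AddCommGroup E] [Module ℝ E] [TopologicalSpace E]
    [IsTopologicalAddGroup E] [ContinuousSMul ℝ E] [T2Space E]
    [MeasurableSpace E] [BorelSpace E]
    (μ : Measure E) [IsProbabilityMeasure μ] (hμ : Hyperbolic μ) (S : Set E)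
    (hS : ∀ n : ℕ, ∀ a ∈ S, ∀ b : E,
      (1 - ((n : ℝ) + 2)⁻¹) • a + ((n : ℝ) + 2)⁻¹ • b ∈ S → b ∈ S)
    (A B : Set E) (hA : IsCompact A) (hB : IsCompact B)
    (hAS : A ⊆ S) (hBS : B ⊆ Sᶜ) (hA0 : 0 < μ A) (hB0 : 0 < μ B) : False := by
  have hAne : A.Nonempty := nonempty_of_measure_ne_zero hA0.ne'
  have hBne : B.Nonempty := nonempty_of_measure_ne_zero hB0.ne'
  set t : ℕ → ℝ := fun n => ((n : ℝ) + 2)⁻¹ with ht_def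
  have ht_pos : ∀ n, 0 < t n := fun n => by positivity
  have ht_lt_one : ∀ n, t n < 1 := by
    intro n
    rw [ht_def, inv_lt_one_iff₀]
    right; linarith [Nat.cast_nonneg (α := ℝ) n]
  have ht0 : Tendsto t atTop (𝓝 0) := by
    apply tendsto_inv_atTop_zero.comp
    exact tendsto_atTop_add_const_right _ 2 tendsto_natCast_atTop_atTop
  set C : ℕ → Set E := fun n => (1 - t n) • A + t n • B with hC_def
  have hCco : ∀ n, IsCompact (C n) :=
    fun n => (hA.smul (1 - t n)).add (hB.smul (t n))
  have hCmeas : ∀ n, min (μ A) (μ B) ≤ μ (C n) := fun n =>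
    hμ A B hAne hBne hA hB (t n) ⟨ht_pos n, ht_lt_one n⟩
  have hCS : ∀ n, C n ⊆ Sᶜ := by
    intro n x hx hxS
    obtain ⟨y, hy, z, hz, rfl⟩ := hx
    obtain ⟨a, ha, rfl⟩ := hy
    obtain ⟨b, hb, rfl⟩ := hz
    exact hBS hb (hS n a (hAS ha) b hxS)
  set D : ℕ → Set E := fun N => ⋃ m, ⋃ (_ : N ≤ m), C m with hD_def
  have hD_anti : Antitone D := by
    intro N M hNM x hx
    simp only [hD_def, mem_iUnion] at hx ⊢
    obtain ⟨m, hm, hx⟩ := hx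
    exact ⟨m, hNM.trans hm, hx⟩
  have hD_nm : ∀ N, NullMeasurableSet (D N) μ := by
    intro N
    exact (MeasurableSet.iUnion fun m => MeasurableSet.iUnion fun _ =>
      (hCco m).isClosed.measurableSet).nullMeasurableSet
  have hD_meas : ∀ N, min (μ A) (μ B) ≤ μ (D N) := by
    intro N
    refine le_trans (hCmeas N) (measure_mono ?_)
    intro x hx
    simp only [hD_def, mem_iUnion]
    exact ⟨N, le_refl N, hx⟩
  -- The intersection is empty.
  have hD_empty : (⋂ N, D N) = ∅ := by
    by_contra h
    obtain ⟨x, hx⟩ := nonempty_iff_ne_empty.2 h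
    have hx' : ∀ N, ∃ m, N ≤ m ∧ ∃ a ∈ A, ∃ b ∈ B, (1 - t m) • a + t m • b = x := by
      intro N
      have := mem_iInter.1 hx N
      simp only [hD_def, mem_iUnion] at this
      obtain ⟨m, hm, hxm⟩ := this
      obtain ⟨y, hy, z, hz, hyz⟩ := hxm
      obtain ⟨a, ha, rfl⟩ := hy
      obtain ⟨b, hb, rfl⟩ := hz
      exact ⟨m, hm, a, ha, b, hb, hyz⟩
    choose φ hφ a ha b hb hab using hx'
    have hxSc : x ∈ Sᶜ := by
      have : x ∈ C (φ 0) := by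
        rw [← hab 0]
        exact Set.add_mem_add (Set.smul_mem_smul_set (ha 0)) (Set.smul_mem_smul_set (hb 0))
      exact hCS (φ 0) this
    -- pass to an ultrafilter
    let U : Ultrafilter ℕ := Ultrafilter.of atTop
    have hU : (U : Filter ℕ) ≤ atTop := Ultrafilter.of_le atTop
    have hφtop : Tendsto φ atTop atTop := tendsto_atTop_mono hφ tendsto_id
    set s : ℕ → ℝ := fun N => t (φ N) with hs_def
    have hs0 : Tendsto s (U : Filter ℕ) (𝓝 0) :=
      (ht0.comp hφtop).mono_left hU
    -- b has a limit along U
    obtain ⟨y, _, hby⟩ := hB.ultrafilter_le_nhds (U.map b) (by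
      rw [Ultrafilter.coe_map, Filter.le_principal_iff, Filter.mem_map]
      exact Filter.univ_mem' hb)
    have hby' : Tendsto b (U : Filter ℕ) (𝓝 y) := hby
    have hsb0 : Tendsto (fun N => s N • b N) (U : Filter ℕ) (𝓝 0) := by
      have := hs0.smul hby'
      rwa [zero_smul] at this
    have h1a : Tendsto (fun N => (1 - s N) • a N) (U : Filter ℕ) (𝓝 x) := by
      have heq : (fun N => (1 - s N) • a N) = fun N => x - s N • b N := by
        funext N
        have := hab N
        rw [hs_def]
        simp only []
        rw [eq_sub_iff_add_eq]
        exact this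
      rw [heq]
      simpa using tendsto_const_nhds.sub hsb0
    have hinv : Tendsto (fun N => (1 - s N)⁻¹) (U : Filter ℕ) (𝓝 1) := by
      have h1 : Tendsto (fun N => 1 - s N) (U : Filter ℕ) (𝓝 1) := by
        simpa using tendsto_const_nhds.sub hs0
      have := h1.inv₀ one_ne_zero
      rwa [inv_one] at this
    have haN : Tendsto a (U : Filter ℕ) (𝓝 x) := by
      have heq : a = fun N => (1 - s N)⁻¹ • ((1 - s N) • a N) := by
        funext N
        rw [inv_smul_smul₀ (by linarith [ht_lt_one (φ N)] : (1 : ℝ) - s N ≠ 0)]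
      rw [heq]
      have := hinv.smul h1a
      rwa [one_smul] at this
    have hxA : x ∈ A := hA.isClosed.mem_of_tendsto haN (Filter.Eventually.of_forall ha)
    exact hxSc (hAS hxA)
  have hfin := tendsto_measure_iInter_atTop hD_nm hD_anti ⟨0, measure_ne_top μ _⟩
  rw [hD_empty, measure_empty] at hfin
  have hle : min (μ A) (μ B) ≤ 0 :=
    ge_of_tendsto hfin (Filter.Eventually.of_forall hD_meas)
  exact absurd hle (lt_min hA0 hB0).not_ge


/-- Iterated Minkowski sums of a set, starting from `{0}`. -/
private def sumIter {E : Type*} [AddCommGroup E] (K : Set E) : ℕ → Set E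
  | 0 => {0}
  | n + 1 => sumIter K n + K

/-- **Borell's zero-one law.** If `μ` is a hyperbolic Radon probability measure on a locally
convex Hausdorff space `E`, then for any additive subgroup `H ⊆ E` the inner measure
`μ_*(H)` is `0` or `1`; in particular any `μ`-measurable affine subspace of `E` has
`μ`-measure `0` or `1`. -/
theorem zero_one_law_for_hyperbolic_measures
    {E : Type*} [AddCommGroup E] [Module ℝ E] [TopologicalSpace E] [IsTopologicalAddGroup E]
    [ContinuousSMul ℝ E] [LocallyConvexSpace ℝ E] [T2Space E]
    [MeasurableSpace E] [BorelSpace E]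
    (μ : Measure E) [IsProbabilityMeasure μ] [μ.InnerRegular] (hμ : Hyperbolic μ) :
    (∀ H : AddSubgroup E, innerMeasCompact μ (H : Set E) = 0 ∨
      innerMeasCompact μ (H : Set E) = 1) ∧
    (∀ W : AffineSubspace ℝ E, NullMeasurableSet (W : Set E) μ →
      μ (W : Set E) = 0 ∨ μ (W : Set E) = 1) := by
  constructor
  · -- additive subgroups
    intro H
    by_cases hall : ∀ K : Set E, IsCompact K → K ⊆ (H : Set E) → μ K = 0
    · left
      refine le_antisymm ?_ zero_le
      exact iSup_le fun K => iSup_le fun hK => iSup_le fun hKH => le_of_eq (hall K hK hKH)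
    · right
      push_neg at hall
      obtain ⟨K, hKc, hKH, hK0⟩ := hall
      have hK0' : 0 < μ K := pos_iff_ne_zero.2 hK0
      -- symmetrize
      set K' : Set E := (K ∪ -K) ∪ {0} with hK'_def
      have hK'c : IsCompact K' := (hKc.union hKc.neg).union isCompact_singleton
      have hK'H : K' ⊆ (H : Set E) := by
        intro x hx
        rcases hx with hx | hx
        · rcases hx with hx | hx
          · exact hKH hx
          · rw [Set.mem_neg] at hx
            simpa using H.neg_mem (hKH hx)
        · rw [Set.mem_singleton_iff] at hx
          rw [hx]; exact H.zero_mem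
      have h0K' : (0 : E) ∈ K' := Or.inr rfl
      have hK'sym : ∀ x ∈ K', -x ∈ K' := by
        intro x hx
        rcases hx with hx | hx
        · rcases hx with hx | hx
          · exact Or.inl (Or.inr (by rwa [Set.mem_neg, neg_neg]))
          · rw [Set.mem_neg] at hx
            exact Or.inl (Or.inl hx)
        · rw [Set.mem_singleton_iff] at hx
          rw [hx, neg_zero]; exact h0K'
      set F : ℕ → Set E := sumIter K' with hF_def
      have hF_zero : F 0 = {0} := rfl
      have hF_succ : ∀ n, F (n + 1) = F n + K' := fun n => rfl
      have hFc : ∀ n, IsCompact (F n) := by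
        intro n
        induction n with
        | zero => exact isCompact_singleton
        | succ n ih => rw [hF_succ]; exact ih.add hK'c
      have hFH : ∀ n, F n ⊆ (H : Set E) := by
        intro n
        induction n with
        | zero =>
          rw [hF_zero]
          exact Set.singleton_subset_iff.2 H.zero_mem
        | succ n ih =>
          rw [hF_succ]
          rintro x ⟨y, hy, z, hz, rfl⟩
          exact H.add_mem (ih hy) (hK'H hz)
      have hF0 : ∀ n, (0 : E) ∈ F n := by
        intro n
        induction n with
        | zero => exact rfl
        | succ n ih =>
          rw [hF_succ]
          exact ⟨0, ih, 0, h0K', add_zero 0⟩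
      have hFmono : Monotone F := by
        apply monotone_nat_of_le_succ
        intro n x hx
        rw [hF_succ]
        exact ⟨x, hx, 0, h0K', add_zero x⟩
      have hFadd : ∀ m n : ℕ, ∀ a b : E, a ∈ F m → b ∈ F n → a + b ∈ F (m + n) := by
        intro m n
        induction n with
        | zero =>
          intro a b ha hb
          rw [hF_zero, Set.mem_singleton_iff] at hb
          simpa [hb] using ha
        | succ n ih =>
          intro a b ha hb
          rw [hF_succ] at hb
          obtain ⟨c, hc, k, hk, rfl⟩ := hb
          have : a + (c + k) = (a + c) + k := by abel
          rw [this, ← Nat.add_assoc, hF_succ]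
          exact ⟨a + c, ih a c ha hc, k, hk, rfl⟩
      have hFneg : ∀ n : ℕ, ∀ a : E, a ∈ F n → -a ∈ F n := by
        intro n
        induction n with
        | zero =>
          intro a ha
          rw [hF_zero, Set.mem_singleton_iff] at ha ⊢
          rw [ha, neg_zero]
        | succ n ih =>
          intro a ha
          rw [hF_succ] at ha ⊢
          obtain ⟨c, hc, k, hk, rfl⟩ := ha
          exact ⟨-c, ih c hc, -k, hK'sym k hk, (neg_add c k).symm⟩
      set G₀ : Set E := ⋃ n, F n with hG0_def
      have hG0_meas : MeasurableSet G₀ :=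
        MeasurableSet.iUnion fun n => (hFc n).isClosed.measurableSet
      have hG0_zero : (0 : E) ∈ G₀ := Set.mem_iUnion.2 ⟨0, hF0 0⟩
      have hG0_add : ∀ a b : E, a ∈ G₀ → b ∈ G₀ → a + b ∈ G₀ := by
        intro a b ha hb
        obtain ⟨m, hm⟩ := Set.mem_iUnion.1 ha
        obtain ⟨n, hn⟩ := Set.mem_iUnion.1 hb
        exact Set.mem_iUnion.2 ⟨m + n, hFadd m n a b hm hn⟩
      have hG0_neg : ∀ a : E, a ∈ G₀ → -a ∈ G₀ := by
        intro a ha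
        obtain ⟨n, hn⟩ := Set.mem_iUnion.1 ha
        exact Set.mem_iUnion.2 ⟨n, hFneg n a hn⟩
      have hG0_nsmul : ∀ (q : ℕ) (a : E), a ∈ G₀ → q • a ∈ G₀ := by
        intro q a ha
        induction q with
        | zero => rw [zero_smul]; exact hG0_zero
        | succ q ih =>
          rw [succ_nsmul]
          exact hG0_add _ _ ih ha
      have hG0_ext : ∀ n : ℕ, ∀ a ∈ G₀, ∀ b : E,
          (1 - ((n : ℝ) + 2)⁻¹) • a + ((n : ℝ) + 2)⁻¹ • b ∈ G₀ → b ∈ G₀ := by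
        intro n a haG b hc
        set c : E := (1 - ((n : ℝ) + 2)⁻¹) • a + ((n : ℝ) + 2)⁻¹ • b with hc_def
        have hr : ((n : ℝ) + 2) ≠ 0 := by positivity
        have key : ((n : ℝ) + 2) • c = ((n : ℝ) + 1) • a + b := by
          rw [hc_def, smul_add, smul_smul, smul_smul, mul_inv_cancel₀ hr, one_smul,
            mul_sub, mul_one, mul_inv_cancel₀ hr]
          congr 1
          ring_nf
        have hb_eq : b = ((n : ℝ) + 2) • c + -(((n : ℝ) + 1) • a) := by
          rw [key]; abel
        have hcast2 : ((n : ℝ) + 2) • c = (n + 2 : ℕ) • c := by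
          rw [← Nat.cast_smul_eq_nsmul ℝ]
          push_cast
          ring_nf
        have hcast1 : ((n : ℝ) + 1) • a = (n + 1 : ℕ) • a := by
          rw [← Nat.cast_smul_eq_nsmul ℝ]
          push_cast
          ring_nf
        rw [hb_eq, hcast2, hcast1]
        exact hG0_add _ _ (hG0_nsmul (n + 2) c hc) (hG0_neg _ (hG0_nsmul (n + 1) a haG))
      have hKG0 : K ⊆ G₀ := by
        intro x hx
        refine Set.mem_iUnion.2 ⟨1, ?_⟩
        rw [hF_succ, hF_zero]
        exact ⟨0, rfl, x, Or.inl (Or.inl hx), zero_add x⟩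
      -- G₀ has measure 1
      have hG0_one : μ G₀ = 1 := by
        by_contra hne
        have hlt : μ G₀ < 1 := lt_of_le_of_ne prob_le_one hne
        have hcompl : 0 < μ G₀ᶜ := by
          rw [measure_compl hG0_meas (measure_ne_top μ _), measure_univ]
          exact tsub_pos_of_lt hlt
        obtain ⟨B, hB_sub, hBc, hB0⟩ := hG0_meas.compl.exists_lt_isCompact hcompl
        exact borell_key μ hμ G₀ hG0_ext K B hKc hBc hKG0 hB_sub hK0' hB0
      refine le_antisymm ?_ ?_
      · exact iSup_le fun K => iSup_le fun _ => iSup_le fun _ => prob_le_one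
      · have hiU : μ G₀ = ⨆ n, μ (F n) :=
          hFmono.directed_le.measure_iUnion
        rw [← hG0_one, hiU]
        refine iSup_le fun n => ?_
        refine le_iSup_of_le (F n) ?_
        rw [iSup_pos (hFc n), iSup_pos (hFH n)]
  · -- affine subspaces
    intro W hW
    by_cases h0 : μ (W : Set E) = 0
    · left; exact h0
    · right
      by_contra hne
      have hlt : μ (W : Set E) < 1 := lt_of_le_of_ne prob_le_one hne
      have hWc_pos : 0 < μ (W : Set E)ᶜ := by
        rw [measure_compl₀ hW (measure_ne_top μ _), measure_univ]
        exact tsub_pos_of_lt hlt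
      obtain ⟨TA, hTA_sub, hTA_meas, hTA_ae⟩ := hW.exists_measurable_subset_ae_eq
      have hTA_pos : 0 < μ TA := by
        rw [measure_congr hTA_ae]
        exact pos_iff_ne_zero.2 h0
      obtain ⟨A, hA_sub, hAc, hA0⟩ := hTA_meas.exists_lt_isCompact hTA_pos
      obtain ⟨TB, hTB_sub, hTB_meas, hTB_ae⟩ := hW.compl.exists_measurable_subset_ae_eq
      have hTB_pos : 0 < μ TB := by
        rw [measure_congr hTB_ae]
        exact hWc_pos
      obtain ⟨B, hB_sub, hBc, hB0⟩ := hTB_meas.exists_lt_isCompact hTB_pos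
      have hSW : ∀ n : ℕ, ∀ a ∈ (W : Set E), ∀ b : E,
          (1 - ((n : ℝ) + 2)⁻¹) • a + ((n : ℝ) + 2)⁻¹ • b ∈ (W : Set E) → b ∈ (W : Set E) := by
        intro n a haW b hc
        set t : ℝ := ((n : ℝ) + 2)⁻¹ with ht_def
        have ht_ne : t ≠ 0 := by rw [ht_def]; positivity
        set c : E := (1 - t) • a + t • b with hc_def
        have hsub : c - a = t • (b - a) := by
          rw [hc_def, smul_sub, sub_smul, one_smul]
          abel
        have hb_eq : b = t⁻¹ • (c - a) + a := by
          rw [hsub, inv_smul_smul₀ ht_ne, sub_add_cancel]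
        have hmem : t⁻¹ • (c -ᵥ a) +ᵥ a ∈ W :=
          AffineSubspace.smul_vsub_vadd_mem W t⁻¹ hc haW haW
        rw [vsub_eq_sub, vadd_eq_add] at hmem
        rw [hb_eq]
        exact hmem
      exact borell_key μ hμ (W : Set E) hSW A B hAc hBc
        (hA_sub.trans hTA_sub) (hB_sub.trans hTB_sub) hA0 hB0
end

section
/- For α > 0, any α-concave finite Radon measure μ on a locally convex Hausdorff real topological vector space E is finite dimensional and compactly supported; that is, the support of μ is a compact set contained in a finite-dimensional affine subspace of E. -/
set_option linter.unusedSectionVars false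
set_option maxHeartbeats 1000000


open MeasureTheory Set Pointwise
open scoped ENNReal NNReal

/-- The generalized `α`-mean of two nonnegative extended reals with weights `1 - t` and `t`,
for `α ∈ [-∞, 1]`. -/
noncomputable def alphaMean (α : EReal) (t : ℝ) (a b : ℝ≥0∞) : ℝ≥0∞ :=
  if α = ⊥ then min a b
  else if α = 0 then a ^ (1 - t) * b ^ t
  else (ENNReal.ofReal (1 - t) * a ^ α.toReal + ENNReal.ofReal t * b ^ α.toReal) ^ (1 / α.toReal)

/-- `α`-concavity of a measure: for all nonempty compact `A, B` and `t ∈ (0,1)`,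
`μ((1-t)•A + t•B) ≥ M_α^t(μ(A), μ(B))`. -/
def AlphaConcave {E : Type*} [AddCommMonoid E] [Module ℝ E] [TopologicalSpace E]
    [MeasurableSpace E] (α : EReal) (μ : Measure E) : Prop :=
  ∀ A B : Set E, A.Nonempty → B.Nonempty → IsCompact A → IsCompact B →
    ∀ t : ℝ, t ∈ Set.Ioo (0 : ℝ) 1 →
      alphaMean α t (μ A) (μ B) ≤ μ ((1 - t) • A + t • B)

/-- The support of a measure: the set of points all of whose open neighbourhoods have
positive measure. -/
def measSupport {E : Type*} [TopologicalSpace E] [MeasurableSpace E] (μ : Measure E) :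
    Set E :=
  {x | ∀ U : Set E, IsOpen U → x ∈ U → 0 < μ U}

section Aux

variable {E : Type*} [AddCommGroup E] [Module ℝ E] [TopologicalSpace E] [IsTopologicalAddGroup E]
    [ContinuousSMul ℝ E] [T2Space E] [MeasurableSpace E] [BorelSpace E]

private lemma alphaMean_coe (α : ℝ) (hα : 0 < α) (t : ℝ) (a b : ℝ≥0∞) :
    alphaMean (↑α : EReal) t a b
      = (ENNReal.ofReal (1 - t) * a ^ α + ENNReal.ofReal t * b ^ α) ^ (1 / α) := by
  rw [alphaMean, if_neg (EReal.coe_ne_bot α), if_neg, EReal.toReal_coe]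
  exact_mod_cast hα.ne'

private lemma key1 {α : ℝ} (hα : 0 < α) {μ : Measure E} (hμ : AlphaConcave (↑α) μ)
    {A B : Set E} (hA : A.Nonempty) (hB : B.Nonempty) (hAc : IsCompact A) (hBc : IsCompact B)
    {t : ℝ} (ht : t ∈ Set.Ioo (0:ℝ) 1) :
    ENNReal.ofReal t ^ (1 / α) * μ B ≤ μ ((1 - t) • A + t • B) := by
  refine le_trans ?_ (hμ A B hA hB hAc hBc t ht)
  rw [alphaMean_coe α hα]
  have h1 : ENNReal.ofReal t ^ (1/α) * μ B
      = (ENNReal.ofReal t * μ B ^ α) ^ (1/α) := by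
    rw [ENNReal.mul_rpow_of_nonneg _ _ (by positivity), ← ENNReal.rpow_mul,
      mul_one_div_cancel hα.ne', ENNReal.rpow_one]
  rw [h1]
  exact ENNReal.rpow_le_rpow le_add_self (by positivity)

private lemma measSupport_closed (μ : Measure E) : IsClosed (measSupport μ) := by
  rw [← isOpen_compl_iff, isOpen_iff_forall_mem_open]
  intro x hx
  simp only [measSupport, mem_compl_iff, mem_setOf_eq, not_forall, not_lt,
    nonpos_iff_eq_zero] at hx
  obtain ⟨U, hU, hxU, hU0⟩ := hx
  refine ⟨U, fun y hy hymem => ?_, hU, hxU⟩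
  have := hymem U hU hy
  simp [hU0] at this

private lemma measSupport_convex [LocallyConvexSpace ℝ E] {α : ℝ} (hα : 0 < α)
    {μ : Measure E} [μ.InnerRegular] (hμ : AlphaConcave (↑α) μ) :
    Convex ℝ (measSupport μ) := by
  intro x hx y hy a b ha hb hab
  rcases eq_or_lt_of_le ha with ha0 | ha
  · have hb1 : b = 1 := by linarith
    simpa [← ha0, hb1] using hy
  rcases eq_or_lt_of_le hb with hb0 | hb
  · have ha1 : a = 1 := by linarith
    simpa [← hb0, ha1] using hx
  intro U hU hzU
  set z := a • x + b • y with hz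
  obtain ⟨V', ⟨hVn, hVc⟩, hVU⟩ :=
    ((LocallyConvexSpace.convex_basis (𝕜 := ℝ) z).mem_iff).mp (hU.mem_nhds hzU)
  set T : Set E := (fun v => v - z) '' V' with hT
  have h0T : (0 : E) ∈ T := ⟨z, mem_of_mem_nhds hVn, sub_self z⟩
  have hTc : Convex ℝ T := by
    have : T = (fun v => -z + v) '' V' := by
      ext w; simp [hT, sub_eq_neg_add, add_comm]
    rw [this]
    exact hVc.translate (-z)
  -- neighborhoods of x and y
  have hTmem : ∀ p : E, {w : E | w - p ∈ T} ∈ nhds p := by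
    intro p
    have hcont : Continuous fun w : E => w - p + z := by continuity
    have : {w : E | w - p ∈ T} = (fun w : E => w - p + z) ⁻¹' V' := by
      ext w
      simp only [mem_setOf_eq, mem_preimage, hT, mem_image]
      constructor
      · rintro ⟨v, hv, hvw⟩
        have : w - p + z = v := by rw [← hvw]; abel
        rwa [this]
      · intro h
        exact ⟨w - p + z, h, by abel⟩
    rw [this]
    exact hcont.continuousAt.preimage_mem_nhds (by simpa using hVn)
  have hgetC : ∀ p : E, p ∈ measSupport μ →
      ∃ A : Set E, IsCompact A ∧ A.Nonempty ∧ 0 < μ A ∧ ∀ q ∈ A, q - p ∈ T := by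
    intro p hp
    have hopen : IsOpen (interior {w : E | w - p ∈ T}) := isOpen_interior
    have hpmem : p ∈ interior {w : E | w - p ∈ T} :=
      mem_interior_iff_mem_nhds.mpr (hTmem p)
    have hpos : 0 < μ (interior {w : E | w - p ∈ T}) := hp _ hopen hpmem
    obtain ⟨A, hAsub, hAc, hA⟩ := hopen.measurableSet.exists_lt_isCompact hpos
    exact ⟨A, hAc, nonempty_of_measure_ne_zero hA.ne', hA,
      fun q hq => by
        have h1 : q ∈ {w : E | w - p ∈ T} := interior_subset (hAsub hq)
        exact h1⟩
  obtain ⟨A, hAc, hAne, hA, hAT⟩ := hgetC x hx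
  obtain ⟨B, hBc, hBne, hB, hBT⟩ := hgetC y hy
  have hb1 : b < 1 := by linarith
  have hkey := key1 hα hμ hAne hBne hAc hBc (t := b) ⟨hb, hb1⟩
  have hsub : (1 - b) • A + b • B ⊆ U := by
    rintro _ ⟨_, ⟨p, hp, rfl⟩, _, ⟨q, hq, rfl⟩, rfl⟩
    have hmem : (1 - b) • (p - x) + b • (q - y) ∈ T :=
      hTc (hAT p hp) (hBT q hq) (by linarith) (le_of_lt hb) (by ring)
    obtain ⟨v, hv, hveq⟩ := hmem
    have hveq' : v - z = (1 - b) • (p - x) + b • (q - y) := hveq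
    have hv2 : v = z + ((1 - b) • (p - x) + b • (q - y)) := by rw [← hveq']; abel
    have hab' : a = 1 - b := by linarith
    have heq : (1 - b) • p + b • q = v := by
      rw [hv2, hz, hab']; module
    show (1 - b) • p + b • q ∈ U
    rw [heq]
    exact hVU hv
  calc (0 : ℝ≥0∞) < ENNReal.ofReal b ^ (1/α) * μ B := by
        apply ENNReal.mul_pos _ hB.ne'
        have : (0:ℝ≥0∞) < ENNReal.ofReal b := ENNReal.ofReal_pos.mpr hb
        exact (ENNReal.rpow_pos this ENNReal.ofReal_ne_top).ne'
    _ ≤ μ ((1 - b) • A + b • B) := hkey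
    _ ≤ μ U := measure_mono hsub

private lemma exists_dual_family [LocallyConvexSpace ℝ E] {N : ℕ} {v : Fin N → E}
    (hv : LinearIndependent ℝ v) :
    ∃ f : Fin N → (E →L[ℝ] ℝ), ∀ i j, f i (v j) = if i = j then 1 else 0 := by
  have hstep : ∀ i : Fin N, ∃ f : E →L[ℝ] ℝ, f (v i) = 1 ∧ ∀ j, j ≠ i → f (v j) = 0 := by
    intro i
    set s : Submodule ℝ E := Submodule.span ℝ (v '' {j | j ≠ i}) with hs
    have hfin : FiniteDimensional ℝ s :=
      FiniteDimensional.span_of_finite ℝ ((Set.toFinite _).image v)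
    have hclosed : IsClosed (s : Set E) := s.closed_of_finiteDimensional
    have hnot : v i ∉ s := hv.notMem_span_image (by simp)
    obtain ⟨g, u, hgu, hgs⟩ := geometric_hahn_banach_point_closed s.convex hclosed hnot
    have hzero : ∀ w ∈ s, g w = 0 := by
      intro w hw
      by_contra hne
      have h1 := hgs (((u - 1) / g w) • w) (s.smul_mem _ hw)
      rw [_root_.map_smul, smul_eq_mul, div_mul_cancel₀ _ hne] at h1
      linarith
    have hu0 : u < 0 := by
      have := hgs 0 s.zero_mem
      simpa using this
    have hgvi : g (v i) ≠ 0 := by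
      intro h; rw [h] at hgu; linarith
    refine ⟨(g (v i))⁻¹ • g, ?_, ?_⟩
    · simp [inv_mul_cancel₀ hgvi]
    · intro j hj
      have : v j ∈ s := Submodule.subset_span ⟨j, hj, rfl⟩
      simp [hzero _ this]
  choose f hf1 hf2 using hstep
  refine ⟨f, fun i j => ?_⟩
  by_cases h : i = j
  · subst h; simp [hf1]
  · simp [h, hf2 i j (fun hji => h hji.symm)]

private lemma lemLB {α : ℝ} (hα : 0 < α) {μ : Measure E} [μ.InnerRegular]
    (hμ : AlphaConcave (↑α) μ)
    {K : Set E} (hKne : K.Nonempty) (hKc : IsCompact K)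
    {W : Set E} (hWo : IsOpen W) (h0W : (0:E) ∈ W)
    {y : E} (hy : y ∈ measSupport μ) (G : ℝ)
    {t : ℝ} (ht : t ∈ Set.Ioo (0:ℝ) 1)
    (hsub : ∀ w ∈ W, ∀ k ∈ K, (1-t) • (y + t • w) + t • k ∈ y +ᵥ (2*t*G) • W) :
    ENNReal.ofReal t ^ (1/α) * μ K ≤ μ (y +ᵥ (2*t*G) • W) := by
  have hUo : IsOpen (y +ᵥ t • W) := (hWo.smul₀ (ne_of_gt ht.1)).vadd y
  have hymem : y ∈ y +ᵥ t • W := by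
    refine ⟨t • (0:E), smul_mem_smul_set h0W, by simp⟩
  have hpos : 0 < μ (y +ᵥ t • W) := hy _ hUo hymem
  obtain ⟨B, hBsub, hBc, hB⟩ := hUo.measurableSet.exists_lt_isCompact hpos
  have hBne : B.Nonempty := nonempty_of_measure_ne_zero hB.ne'
  refine le_trans (key1 hα hμ hBne hKne hBc hKc ht) (measure_mono ?_)
  rintro _ ⟨_, ⟨p, hp, rfl⟩, _, ⟨k, hk, rfl⟩, rfl⟩
  obtain ⟨_, ⟨w, hw, rfl⟩, hpw⟩ := hBsub hp
  show (1-t) • p + t • k ∈ y +ᵥ (2*t*G) • W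
  have : p = y + t • w := hpw.symm
  rw [this]
  exact hsub w hw k hk

end Aux


private lemma nat_eq_of_abs_sub_lt_one {a b : ℕ} (h : |(a:ℝ) - (b:ℝ)| < 1) : a = b := by
  by_contra hne
  have h1 : ((a:ℤ)) ≠ (b:ℤ) := by exact_mod_cast hne
  have h2 : (1:ℤ) ≤ |(a:ℤ) - (b:ℤ)| := Int.one_le_abs (sub_ne_zero.mpr h1)
  have h3 : (1:ℝ) ≤ |(a:ℝ) - (b:ℝ)| := by exact_mod_cast h2
  linarith

/-- **Theorem 2.4.** For `α > 0`, any `α`-concave finite Radon measure on a locally convex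
Hausdorff space `E` is finite dimensional and compactly supported: its support is a compact
set contained in a finite-dimensional affine subspace of `E`. -/
theorem alphaConcave_positive_alpha_finite_dimensional_compact_support
    {E : Type*} [AddCommGroup E] [Module ℝ E] [TopologicalSpace E] [IsTopologicalAddGroup E]
    [ContinuousSMul ℝ E] [LocallyConvexSpace ℝ E] [T2Space E]
    [MeasurableSpace E] [BorelSpace E]
    (α : ℝ) (hα : 0 < α) (hα1 : α ≤ 1)
    (μ : Measure E) [IsFiniteMeasure μ] [μ.InnerRegular] (hμ : AlphaConcave (↑α) μ) :
    IsCompact (measSupport μ) ∧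
    ∃ W : AffineSubspace ℝ E, FiniteDimensional ℝ W.direction ∧
      measSupport μ ⊆ (W : Set E) := by
  have hSclosed := measSupport_closed μ
  by_cases hm : μ univ = 0
  · have hS : measSupport μ = ∅ := by
      rw [eq_empty_iff_forall_notMem]
      intro x hx
      have := hx univ isOpen_univ (mem_univ x)
      rw [hm] at this
      exact lt_irrefl 0 this
    refine ⟨by rw [hS]; exact isCompact_empty, ⊥, ?_, by rw [hS]; exact empty_subset _⟩
    rw [AffineSubspace.direction_bot]
    infer_instance
  -- μ ≠ 0
  have hmtop : μ univ ≠ ⊤ := measure_ne_top μ univ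
  have h23 : ENNReal.ofReal (2/3) * μ univ < μ univ := by
    conv_rhs => rw [← one_mul (μ univ)]
    rw [ENNReal.mul_lt_mul_iff_left hm hmtop]
    exact ENNReal.ofReal_lt_one.mpr (by norm_num)
  obtain ⟨K, -, hKc, hKm⟩ := MeasurableSet.univ.exists_lt_isCompact h23
  have hKpos : 0 < μ K := lt_of_le_of_lt zero_le hKm
  have hK0 : μ K ≠ 0 := hKpos.ne'
  have hKne : K.Nonempty := nonempty_of_measure_ne_zero hK0
  -- Part A : compactness of the support
  set t₀ : ℝ := 2 ^ (-α) with ht₀def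
  have ht₀0 : 0 < t₀ := Real.rpow_pos_of_pos two_pos _
  have ht₀1 : t₀ < 1 := Real.rpow_lt_one_of_one_lt_of_neg one_lt_two (neg_lt_zero.mpr hα)
  have h1t₀ : (0:ℝ) < 1 - t₀ := by linarith
  have htt : ENNReal.ofReal t₀ ^ (1/α) = ENNReal.ofReal 2⁻¹ := by
    rw [ENNReal.ofReal_rpow_of_pos ht₀0]
    congr 1
    rw [ht₀def, ← Real.rpow_mul (le_of_lt two_pos)]
    rw [show -α * (1/α) = -1 by field_simp]
    exact Real.rpow_neg_one 2
  set K₁ : Set E := (1-t₀)⁻¹ • K + (-((1-t₀)⁻¹ * t₀)) • K with hK₁def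
  have hK₁c : IsCompact K₁ := (hKc.smul _).add (hKc.smul _)
  have hSsub : measSupport μ ⊆ K₁ := by
    intro x hx
    rw [← hK₁c.isClosed.closure_eq, mem_closure_iff]
    intro U hUo hxU
    have hUpos := hx U hUo hxU
    obtain ⟨B, hBsub, hBc, hB⟩ := hUo.measurableSet.exists_lt_isCompact hUpos
    have hBne := nonempty_of_measure_ne_zero hB.ne'
    have hkey := key1 hα hμ hBne hKne hBc hKc (t := t₀) ⟨ht₀0, ht₀1⟩
    rw [htt] at hkey
    have hinter : (((1-t₀) • B + t₀ • K) ∩ K).Nonempty := by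
      by_contra hemp
      rw [not_nonempty_iff_eq_empty] at hemp
      have hdisj : Disjoint ((1-t₀) • B + t₀ • K) K :=
        Set.disjoint_iff_inter_eq_empty.mpr hemp
      have hun := measure_union (μ := μ) hdisj hKc.measurableSet
      have hle : μ (((1-t₀) • B + t₀ • K) ∪ K) ≤ μ univ := measure_mono (subset_univ _)
      rw [hun] at hle
      have hbig : μ univ < μ ((1-t₀) • B + t₀ • K) + μ K := by
        have h1 : ENNReal.ofReal (3/2) * (ENNReal.ofReal (2/3) * μ univ)
            < ENNReal.ofReal (3/2) * μ K := by
          rw [ENNReal.mul_lt_mul_iff_right (by simp) ENNReal.ofReal_ne_top]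
          exact hKm
        have h2 : ENNReal.ofReal (3/2) * (ENNReal.ofReal (2/3) * μ univ) = μ univ := by
          rw [← mul_assoc, ← ENNReal.ofReal_mul (by norm_num)]
          norm_num
        have h3 : ENNReal.ofReal (3/2) * μ K = ENNReal.ofReal 2⁻¹ * μ K + μ K := by
          rw [show ENNReal.ofReal (3/2) = ENNReal.ofReal 2⁻¹ + 1 by
            rw [← ENNReal.ofReal_one, ← ENNReal.ofReal_add (by norm_num) (by norm_num)]
            norm_num]
          rw [add_mul, one_mul]
        rw [h2, h3] at h1
        exact lt_of_lt_of_le h1 (add_le_add_left hkey _)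
      exact absurd (lt_of_lt_of_le hbig hle) (lt_irrefl _)
    obtain ⟨c, hcC, hcK⟩ := hinter
    obtain ⟨_, ⟨p, hp, rfl⟩, _, ⟨k, hk, rfl⟩, rfl⟩ := hcC
    refine ⟨p, hBsub hp, ?_⟩
    refine ⟨(1-t₀)⁻¹ • ((1-t₀) • p + t₀ • k), smul_mem_smul_set hcK,
      (-((1-t₀)⁻¹ * t₀)) • k, smul_mem_smul_set hk, ?_⟩
    rw [smul_add, smul_smul, smul_smul, inv_mul_cancel₀ h1t₀.ne', one_smul, neg_smul]
    module
  have hScompact : IsCompact (measSupport μ) :=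
    hK₁c.of_isClosed_subset hSclosed hSsub
  refine ⟨hScompact, ?_⟩
  -- Part B : finite-dimensionality
  rcases eq_empty_or_nonempty (measSupport μ) with hSe | ⟨x₀, hx₀⟩
  · refine ⟨⊥, ?_, by rw [hSe]; exact empty_subset _⟩
    rw [AffineSubspace.direction_bot]
    infer_instance
  by_cases hfd : FiniteDimensional ℝ
      (Submodule.span ℝ ((fun z => z - x₀) '' measSupport μ))
  · refine ⟨AffineSubspace.mk' x₀ (Submodule.span ℝ ((fun z => z - x₀) '' measSupport μ)),
      ?_, ?_⟩
    · rw [AffineSubspace.direction_mk']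
      exact hfd
    · intro x hx
      have hmem : x - x₀ ∈ Submodule.span ℝ ((fun z => z - x₀) '' measSupport μ) :=
        Submodule.subset_span ⟨x, hx, rfl⟩
      have h2 := AffineSubspace.vadd_mem_mk' x₀ hmem
      simpa [vadd_eq_add, sub_add_cancel] using h2
  exfalso
  have hconv : Convex ℝ (measSupport μ) := measSupport_convex hα hμ
  -- choose N
  set N : ℕ := ⌈α⁻¹⌉₊ + 1 with hNdef
  have hβ : α⁻¹ ≤ (N:ℝ) - 1 := by
    have h := Nat.le_ceil α⁻¹
    have : ((⌈α⁻¹⌉₊ : ℕ) : ℝ) = (N:ℝ) - 1 := by rw [hNdef]; push_cast; ring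
    linarith
  have hN1 : 1 ≤ (N:ℝ) := by
    have : (1:ℕ) ≤ N := Nat.le_add_left 1 _
    exact_mod_cast this
  have hNpos : 0 < N := by rw [hNdef]; exact Nat.succ_pos _
  haveI : Nonempty (Fin N) := Fin.pos_iff_nonempty.mp hNpos
  clear_value N
  -- independent vectors
  obtain ⟨bset, hbsub, hbspan, hbind⟩ :=
    exists_linearIndependent ℝ ((fun z => z - x₀) '' measSupport μ)
  have hbinf : bset.Infinite := by
    by_contra hfin
    rw [Set.not_infinite] at hfin
    exact hfd (by rw [← hbspan]; exact FiniteDimensional.span_of_finite ℝ hfin)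
  let g := hbinf.natEmbedding
  set v : Fin N → E := fun i => (g (i:ℕ)).1 with hvdef
  have hvmem : ∀ i, v i ∈ (fun z => z - x₀) '' measSupport μ :=
    fun i => hbsub (g (i:ℕ)).2
  have hvind : LinearIndependent ℝ v := by
    have hinj : Function.Injective (fun i : Fin N => g (i:ℕ)) :=
      fun i j h => Fin.val_injective (g.injective h)
    exact hbind.comp (fun i : Fin N => g (i:ℕ)) hinj
  choose xp hxpS hxpv using fun i => hvmem i
  obtain ⟨f, hf⟩ := exists_dual_family hvind
  -- constants
  have hNe : (Finset.univ : Finset (Fin N)).Nonempty := Finset.univ_nonempty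
  choose R hR using fun i => hKc.exists_bound_of_continuousOn (f i).continuous.continuousOn
  set R₀ : ℝ := Finset.univ.sup' hNe R with hR₀def
  have hR₀ : ∀ i, ∀ z ∈ K, |f i z| ≤ R₀ := by
    intro i z hz
    calc |f i z| = ‖f i z‖ := rfl
      _ ≤ R i := hR i z hz
      _ ≤ R₀ := Finset.le_sup' R (Finset.mem_univ i)
  set P₀ : ℝ := Finset.univ.sup' hNe (fun i => |f i x₀|) with hP₀def
  have hP₀ : ∀ i, |f i x₀| ≤ P₀ := fun i => Finset.le_sup' (fun j => |f j x₀|) (Finset.mem_univ i)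
  clear_value R₀ P₀
  have hR₀0 : 0 ≤ R₀ := by
    obtain ⟨k₀, hk₀⟩ := hKne
    exact le_trans (abs_nonneg _) (hR₀ ⟨0, hNpos⟩ k₀ hk₀)
  have hP₀0 : 0 ≤ P₀ := le_trans (abs_nonneg _) (hP₀ ⟨0, hNpos⟩)
  set G : ℝ := 1/2 + R₀ + (P₀ + 1) with hGdef
  have hG1 : (3/2 : ℝ) ≤ G := by rw [hGdef]; linarith
  clear_value G
  have hG0 : (0:ℝ) < G := lt_of_lt_of_le (by norm_num) hG1
  -- the slab neighbourhood
  set W : Set E := {w | ∀ i, |f i w| < 1/2} with hWdef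
  have hWo : IsOpen W := by
    have : W = ⋂ i, (fun w => |f i w|) ⁻¹' (Set.Iio (1/2)) := by
      ext w; simp [hWdef]
    rw [this]
    exact isOpen_iInter_of_finite fun i =>
      IsOpen.preimage (continuous_abs.comp (f i).continuous) isOpen_Iio
  have h0W : (0:E) ∈ W := by intro i; simp
  -- main quantitative bound
  set q : ℝ := (4*G*(N:ℝ))⁻¹ ^ (1/α) with hqdef
  have hq0 : 0 < q := by
    rw [hqdef]
    have h4 : (0:ℝ) < 4*G*(N:ℝ) := by nlinarith
    exact Real.rpow_pos_of_pos (inv_pos.mpr h4) _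
  clear_value q
  set c₂ : ℝ≥0∞ := ENNReal.ofReal q * μ K with hc₂def
  have hMbound : ∀ M : ℕ, ((M+1 : ℕ) : ℝ≥0∞) * c₂ ≤ μ univ := by
    intro M
    have hMr1 : (1:ℝ) ≤ (M:ℝ)+1 := by
      have h : (0:ℝ) ≤ (M:ℝ) := Nat.cast_nonneg M
      linarith
    have hMr0 : (0:ℝ) < (M:ℝ)+1 := by positivity
    set δ : ℝ := (2*(N:ℝ)*((M:ℝ)+1))⁻¹ with hδdef
    have hδ0 : 0 < δ := by
      rw [hδdef]
      have hN0 : (0:ℝ) < (N:ℝ) := by linarith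
      positivity
    have hδhalf : δ ≤ 1/2 := by
      have h2le : (2:ℝ) ≤ 2*(N:ℝ)*((M:ℝ)+1) := by nlinarith
      calc δ = (2*(N:ℝ)*((M:ℝ)+1))⁻¹ := hδdef
        _ ≤ 2⁻¹ := inv_anti₀ (by norm_num) h2le
        _ = 1/2 := by norm_num
    clear_value δ
    set tM : ℝ := δ / (2*G) with htMdef
    have htM0 : 0 < tM := by rw [htMdef]; positivity
    have htM1 : tM < 1 := by
      rw [htMdef]
      rw [div_lt_one (by positivity)]
      linarith
    have h2tG : 2*tM*G = δ := by
      rw [htMdef]; field_simp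
    clear_value tM
    -- the grid
    set lam : (Fin N → Fin (M+1)) → Fin N → ℝ :=
      fun k i => (((k i : ℕ) : ℝ) + 1) * δ with hlamdef
    set y : (Fin N → Fin (M+1)) → E := fun k => x₀ + ∑ i, lam k i • v i with hydef
    have hlam_pos : ∀ k i, 0 < lam k i := by
      intro k i
      rw [hlamdef]
      have : (0:ℝ) ≤ ((k i : ℕ) : ℝ) := Nat.cast_nonneg _
      positivity
    have hlam_le : ∀ k i, lam k i ≤ (2*(N:ℝ))⁻¹ := by
      intro k i
      rw [hlamdef, hδdef]
      have hki : (((k i : ℕ) : ℝ) + 1) ≤ (M:ℝ)+1 := by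
        have := (k i).is_lt
        have : ((k i : ℕ) : ℝ) ≤ (M:ℝ) := by
          have h := Nat.lt_succ_iff.mp (k i).is_lt
          exact_mod_cast h
        linarith
      have hN0 : (0:ℝ) < (N:ℝ) := by linarith
      calc (((k i : ℕ) : ℝ) + 1) * (2*(N:ℝ)*((M:ℝ)+1))⁻¹
          ≤ ((M:ℝ)+1) * (2*(N:ℝ)*((M:ℝ)+1))⁻¹ := by
            apply mul_le_mul_of_nonneg_right hki (by positivity)
        _ = (2*(N:ℝ))⁻¹ := by
            rw [mul_inv, ← mul_assoc, mul_comm ((M:ℝ)+1) _, mul_assoc,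
              mul_inv_cancel₀ hMr0.ne', mul_one]
    have hlam_sum : ∀ k, ∑ i, lam k i ≤ 1/2 := by
      intro k
      calc ∑ i, lam k i ≤ ∑ _i : Fin N, (2*(N:ℝ))⁻¹ :=
            Finset.sum_le_sum (fun i _ => hlam_le k i)
        _ = (N:ℝ) * (2*(N:ℝ))⁻¹ := by
            rw [Finset.sum_const, Finset.card_univ, Fintype.card_fin, nsmul_eq_mul]
        _ ≤ 1/2 := by
            rw [mul_inv, ← mul_assoc]
            rw [mul_comm (N:ℝ) 2⁻¹, mul_assoc]
            have hN0 : (0:ℝ) < (N:ℝ) := by linarith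
            rw [mul_inv_cancel₀ hN0.ne']
            norm_num
    have hyS : ∀ k, y k ∈ measSupport μ := by
      intro k
      have hw0 : (0:ℝ) ≤ 1 - ∑ i, lam k i := by
        have := hlam_sum k; linarith
      have hkey := hconv.sum_mem (t := (Finset.univ : Finset (Option (Fin N))))
        (w := fun o => Option.elim o (1 - ∑ i, lam k i) (fun i => lam k i))
        (z := fun o => Option.elim o x₀ xp)
        (fun o _ => by
          cases o with
          | none => exact hw0
          | some i => exact (hlam_pos k i).le)
        (by
          rw [Fintype.sum_option]
          show (1 - ∑ i, lam k i) + ∑ i, lam k i = 1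
          ring)
        (fun o _ => by
          cases o with
          | none => exact hx₀
          | some i => exact hxpS i)
      have heq : ∑ o : Option (Fin N),
          (Option.elim o (1 - ∑ i, lam k i) (fun i => lam k i)) • (Option.elim o x₀ xp)
          = y k := by
        rw [Fintype.sum_option]
        show (1 - ∑ i, lam k i) • x₀ + ∑ i : Fin N, lam k i • xp i = y k
        simp only [hydef]
        have hv' : ∀ i, lam k i • v i = lam k i • xp i - lam k i • x₀ := by
          intro i
          rw [← hxpv i]
          simp [smul_sub]
        rw [Finset.sum_congr rfl (fun i _ => hv' i), Finset.sum_sub_distrib,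
          ← Finset.sum_smul, sub_smul, one_smul]
        abel
      rw [heq] at hkey
      exact hkey
    have hfy : ∀ k i, f i (y k) = f i x₀ + lam k i := by
      intro k i
      simp only [hydef, _root_.map_add, map_sum, _root_.map_smul, smul_eq_mul, hf,
        mul_ite, mul_one, mul_zero]
      rw [Finset.sum_ite_eq]
      simp
    have hfy_abs : ∀ k i, |f i (y k)| ≤ P₀ + 1 := by
      intro k i
      rw [hfy k i]
      have h1 : |f i x₀ + lam k i| ≤ |f i x₀| + |lam k i| := abs_add_le _ _
      have h2 : |lam k i| ≤ 1 := by
        rw [abs_of_pos (hlam_pos k i)]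
        have := hlam_le k i
        have hN2 : (2:ℝ) ≤ 2*(N:ℝ) := by linarith
        have : (2*(N:ℝ))⁻¹ ≤ 2⁻¹ := inv_anti₀ (by norm_num) hN2
        have := hlam_le k i
        linarith
      have := hP₀ i
      linarith
    -- lower bound per cell
    have hcell : ∀ k, ENNReal.ofReal tM ^ (1/α) * μ K ≤ μ (y k +ᵥ (2*tM*G) • W) := by
      intro k
      apply lemLB hα hμ hKne hKc hWo h0W (hyS k) G ⟨htM0, htM1⟩
      intro w hw k' hk'
      have hfz : ∀ i, |f i (((1-tM) • (y k + tM • w) + tM • k') - y k)| < tM * G := by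
        intro i
        have h1 : f i (((1-tM) • (y k + tM • w) + tM • k') - y k)
            = tM*((1-tM) * f i w + (f i k' - f i (y k))) := by
          simp only [_root_.map_sub, _root_.map_add, _root_.map_smul, smul_eq_mul]
          ring
        rw [h1, abs_mul, abs_of_pos htM0]
        have hw' : |f i w| < 1/2 := hw i
        have hk'' : |f i k'| ≤ R₀ := hR₀ i k' hk'
        have hyk : |f i (y k)| ≤ P₀ + 1 := hfy_abs k i
        have hb : |(1-tM) * f i w + (f i k' - f i (y k))| < G := by
          have e1 : |(1-tM) * f i w + (f i k' - f i (y k))|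
              ≤ |1-tM| * |f i w| + (|f i k'| + |f i (y k)|) := by
            calc |(1-tM) * f i w + (f i k' - f i (y k))|
                ≤ |(1-tM) * f i w| + |f i k' - f i (y k)| := abs_add_le _ _
              _ ≤ |1-tM| * |f i w| + (|f i k'| + |f i (y k)|) := by
                  rw [abs_mul]
                  exact add_le_add_right (abs_sub _ _) _
          have e2 : |1-tM| ≤ 1 := by rw [abs_of_pos (by linarith)]; linarith
          have e3 : |1-tM| * |f i w| < 1/2 := by
            calc |1-tM| * |f i w| ≤ 1 * |f i w| :=
                  mul_le_mul_of_nonneg_right e2 (abs_nonneg _)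
              _ = |f i w| := one_mul _
              _ < 1/2 := hw'
          rw [hGdef]
          linarith
        exact (mul_lt_mul_iff_right₀ htM0).mpr hb
      have h2tG0 : (0:ℝ) < 2*tM*G := by positivity
      refine ⟨(2*tM*G) • ((2*tM*G)⁻¹ • (((1-tM) • (y k + tM • w) + tM • k') - y k)),
        smul_mem_smul_set ?_, ?_⟩
      · intro i
        rw [_root_.map_smul, smul_eq_mul, abs_mul, abs_of_pos (inv_pos.mpr h2tG0)]
        have h5 := hfz i
        have h6 : (2*tM*G)⁻¹ * |f i ((1 - tM) • (y k + tM • w) + tM • k' - y k)|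
            < (2*tM*G)⁻¹ * (tM*G) :=
          mul_lt_mul_of_pos_left h5 (inv_pos.mpr h2tG0)
        have h7 : (2*tM*G)⁻¹ * (tM*G) = 1/2 := by field_simp
        rw [← h7]
        exact h6
      · rw [smul_inv_smul₀ h2tG0.ne']
        show y k + (((1-tM) • (y k + tM • w) + tM • k') - y k)
            = (1-tM) • (y k + tM • w) + tM • k'
        abel
    -- disjointness
    have hdisj : Pairwise (Function.onFun Disjoint (fun k => y k +ᵥ (2*tM*G) • W)) := by
      intro k k' hkk'
      rw [Function.onFun, Set.disjoint_left]
      rintro z hz1 hz2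
      obtain ⟨_, ⟨w₁, hw₁, rfl⟩, hz1'⟩ := hz1
      obtain ⟨_, ⟨w₂, hw₂, rfl⟩, hz2'⟩ := hz2
      apply hkk'
      funext i
      have he : f i (y k) + (2*tM*G) * f i w₁ = f i (y k') + (2*tM*G) * f i w₂ := by
        have hz1'' : y k +ᵥ (2*tM*G) • w₁ = z := hz1'
        have hz2'' : y k' +ᵥ (2*tM*G) • w₂ = z := hz2'
        have : f i (y k +ᵥ (2*tM*G) • w₁) = f i (y k' +ᵥ (2*tM*G) • w₂) := by
          rw [hz1'', hz2'']
        simpa [vadd_eq_add, _root_.map_add, _root_.map_smul, smul_eq_mul] using this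
      rw [hfy k i, hfy k' i, h2tG] at he
      have hlt : |lam k i - lam k' i| < δ := by
        have h1 : lam k i - lam k' i = δ * (f i w₂ - f i w₁) := by
          rw [mul_sub]; linarith
        rw [h1, abs_mul, abs_of_pos hδ0]
        have : |f i w₂ - f i w₁| < 1 := by
          have a1 : |f i w₂| < 1/2 := hw₂ i
          have a2 : |f i w₁| < 1/2 := hw₁ i
          calc |f i w₂ - f i w₁| ≤ |f i w₂| + |f i w₁| := abs_sub _ _
            _ < 1 := by linarith
        nlinarith
      have hlam_eq : ((k i : ℕ) : ℝ) = ((k' i : ℕ) : ℝ) → k i = k' i := by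
        intro h
        have : (k i : ℕ) = (k' i : ℕ) := by exact_mod_cast h
        exact Fin.val_injective this
      apply hlam_eq
      have habs : |(((k i : ℕ) : ℝ)) - (((k' i : ℕ) : ℝ))| < 1 := by
        have h1 : lam k i - lam k' i
            = ((((k i : ℕ) : ℝ)) - (((k' i : ℕ) : ℝ))) * δ := by
          rw [hlamdef]; ring
        rw [h1, abs_mul, abs_of_pos hδ0] at hlt
        nlinarith [abs_nonneg ((((k i : ℕ) : ℝ)) - (((k' i : ℕ) : ℝ)))]
      exact_mod_cast nat_eq_of_abs_sub_lt_one habs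
    -- summation
    have hmeas : ∀ k : Fin N → Fin (M+1), MeasurableSet (y k +ᵥ (2*tM*G) • W) := by
      intro k
      have h2tG0 : (2*tM*G) ≠ 0 := by positivity
      exact ((hWo.smul₀ h2tG0).vadd (y k)).measurableSet
    have hsum : ∑' k : Fin N → Fin (M+1), μ (y k +ᵥ (2*tM*G) • W) ≤ μ univ := by
      rw [← measure_iUnion hdisj hmeas]
      exact measure_mono (subset_univ _)
    have hcard : ((M+1)^N : ℕ) • (ENNReal.ofReal tM ^ (1/α) * μ K)
        ≤ ∑' k : Fin N → Fin (M+1), μ (y k +ᵥ (2*tM*G) • W) := by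
      rw [tsum_fintype]
      have h := Finset.card_nsmul_le_sum Finset.univ
        (fun k : Fin N → Fin (M+1) => μ (y k +ᵥ (2*tM*G) • W))
        (ENNReal.ofReal tM ^ (1/α) * μ K) (fun k _ => hcell k)
      simpa [Finset.card_univ, Fintype.card_fun, Fintype.card_fin] using h
    -- arithmetic : (M+1) * c₂ ≤ (M+1)^N • (ofReal tM ^ (1/α) * μ K)
    have hcast1 : (((M+1 : ℕ)) : ℝ≥0∞) = ENNReal.ofReal ((M:ℝ)+1) := by
      rw [← ENNReal.ofReal_natCast (M+1)]; norm_num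
    have hcast2 : ((((M+1)^N : ℕ)) : ℝ≥0∞) = ENNReal.ofReal (((M:ℝ)+1)^N) := by
      rw [← ENNReal.ofReal_natCast ((M+1)^N)]; push_cast; ring_nf
    have hreal : ((M:ℝ)+1) * q ≤ (((M:ℝ)+1)^N) * (tM ^ (1/α)) := by
      have htval : tM = (4*G*(N:ℝ))⁻¹ * (((M:ℝ)+1))⁻¹ := by
        rw [htMdef, hδdef, hGdef]
        field_simp
        ring
      have h4GN : (0:ℝ) < 4*G*(N:ℝ) := by nlinarith
      rw [htval, Real.mul_rpow (by positivity) (by positivity), ← hqdef]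
      have e1 : (((M:ℝ)+1)⁻¹) ^ (1/α) = ((M:ℝ)+1) ^ (-(1/α)) := by
        rw [Real.inv_rpow (by positivity), ← Real.rpow_neg (by positivity)]
      have e2 : (((M:ℝ)+1))^N = ((M:ℝ)+1) ^ (N:ℝ) := (Real.rpow_natCast _ N).symm
      rw [e1, e2]
      have e3 : ((M:ℝ)+1) ^ ((N:ℝ)) * ((M:ℝ)+1) ^ (-(1/α))
          = ((M:ℝ)+1) ^ ((N:ℝ) + (-(1/α))) := by
        rw [← Real.rpow_add (by positivity)]
      have e4 : ((M:ℝ)+1) ≤ ((M:ℝ)+1) ^ ((N:ℝ) + (-(1/α))) := by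
        calc ((M:ℝ)+1) = ((M:ℝ)+1) ^ (1:ℝ) := (Real.rpow_one _).symm
          _ ≤ _ := by
              apply Real.rpow_le_rpow_of_exponent_le hMr1
              rw [one_div] at *
              linarith [hβ]
      calc ((M:ℝ)+1) * q ≤ (((M:ℝ)+1) ^ ((N:ℝ) + (-(1/α)))) * q :=
            mul_le_mul_of_nonneg_right e4 hq0.le
        _ = ((M:ℝ)+1) ^ ((N:ℝ)) * ((M:ℝ)+1) ^ (-(1/α)) * q := by rw [e3]
        _ = ((M:ℝ)+1) ^ ((N:ℝ)) * (q * ((M:ℝ)+1) ^ (-(1/α))) := by ring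
    have harith : ((M+1 : ℕ) : ℝ≥0∞) * c₂
        ≤ ((M+1)^N : ℕ) • (ENNReal.ofReal tM ^ (1/α) * μ K) := by
      calc ((M+1:ℕ) : ℝ≥0∞) * c₂
          = ENNReal.ofReal (((M:ℝ)+1) * q) * μ K := by
            rw [hc₂def, ENNReal.ofReal_mul (by positivity), ← mul_assoc, hcast1]
        _ ≤ ENNReal.ofReal ((((M:ℝ)+1)^N) * (tM ^ (1/α))) * μ K := by
            refine mul_le_mul_left (ENNReal.ofReal_le_ofReal hreal) (μ K)
        _ = ((M+1)^N : ℕ) • (ENNReal.ofReal tM ^ (1/α) * μ K) := by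
            rw [nsmul_eq_mul, ENNReal.ofReal_rpow_of_pos htM0,
              ENNReal.ofReal_mul (by positivity), hcast2, mul_assoc]
    have := le_trans harith (le_trans hcard hsum)
    exact this
  -- conclude the contradiction
  have hc₂0 : c₂ ≠ 0 := by
    rw [hc₂def]
    exact mul_ne_zero (by simp [ENNReal.ofReal_eq_zero, not_le]; linarith [hq0]) hK0
  have hc₂top : c₂ ≠ ⊤ := by
    rw [hc₂def]
    exact ENNReal.mul_ne_top ENNReal.ofReal_ne_top (measure_ne_top μ K)
  have hdivtop : μ univ / c₂ ≠ ⊤ := (ENNReal.div_lt_top hmtop hc₂0).ne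
  obtain ⟨n, hn⟩ := ENNReal.exists_nat_gt (ENNReal.div_lt_top hmtop hc₂0).ne
  have h1 : ((n+1 : ℕ) : ℝ≥0∞) ≤ μ univ / c₂ :=
    (ENNReal.le_div_iff_mul_le (Or.inl hc₂0) (Or.inl hc₂top)).mpr (hMbound n)
  have h2 : ((n : ℕ) : ℝ≥0∞) ≤ ((n+1 : ℕ) : ℝ≥0∞) := by exact_mod_cast Nat.le_succ n
  exact absurd (lt_of_lt_of_le hn (le_trans h2 h1)) (lt_irrefl _)
end

section
/- Let E be a real Banach space and let (x_n, y_n, z_n), n ≥ 1, be triples of affinely independent points in E such that x_n → x, y_n → y, z_n → z, where x, y, z are also affinely independent. For each n, let λ_{x_n} and λ_{y_n} be the linear functionals on the two-dimensional subspace spanned by x_n - z_n and y_n - z_n determined by λ_{x_n}(x_n - z_n) = λ_{y_n}(y_n - z_n) = 1 and λ_{x_n}(y_n - z_n) = λ_{y_n}(x_n - z_n) = 0, each extended to continuous linear functionals on all of E with the same norm (via Hahn–Banach). Then sup_{n ≥ 1} ‖λ_{x_n}‖_* < ∞ and sup_{n ≥ 1} ‖λ_{y_n}‖_* < ∞, where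 ‖·‖_* denotes the dual norm. -/
open Filter

theorem aux_dual_pair {E : Type*} [NormedAddCommGroup E] [NormedSpace ℝ E] {a b : E}
    (h : LinearIndependent ℝ ![a, b]) :
    ∃ F G : E →L[ℝ] ℝ, F a = 1 ∧ F b = 0 ∧ G a = 0 ∧ G b = 1 := by
  set W : Subspace ℝ E := Submodule.span ℝ (Set.range ![a, b]) with hW
  haveI : FiniteDimensional ℝ W := FiniteDimensional.span_of_finite ℝ (Set.finite_range _)
  let bas : Module.Basis (Fin 2) ℝ W := Module.Basis.span h
  have hbas : ∀ i, (bas i : E) = ![a, b] i := fun i => congrArg Subtype.val (Module.Basis.span_apply h i)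
  let φ : Fin 2 → W →L[ℝ] ℝ := fun i => LinearMap.toContinuousLinearMap (bas.coord i)
  have key : ∀ i, ∃ F : E →L[ℝ] ℝ, ∀ w : W, F w = φ i w := by
    intro i
    obtain ⟨F, hF, -⟩ := exists_extension_norm_eq W (φ i)
    exact ⟨F, hF⟩
  obtain ⟨F, hF⟩ := key 0
  obtain ⟨G, hG⟩ := key 1
  have hcoord : ∀ i j : Fin 2, φ i (bas j) = if j = i then 1 else 0 := by
    intro i j
    simp [φ, Module.Basis.coord_apply, bas.repr_self, Finsupp.single_apply]
  refine ⟨F, G, ?_, ?_, ?_, ?_⟩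
  · have := hF (bas 0); rw [hbas 0] at this; simpa [hcoord 0 0] using this
  · have := hF (bas 1); rw [hbas 1] at this; simpa [hcoord 0 1] using this
  · have := hG (bas 0); rw [hbas 0] at this; simpa [hcoord 1 0] using this
  · have := hG (bas 1); rw [hbas 1] at this; simpa [hcoord 1 1] using this

theorem aux_key {E : Type*} [NormedAddCommGroup E] [NormedSpace ℝ E]
    (u v : ℕ → E) (u₀ v₀ : E)
    (hind₀ : LinearIndependent ℝ ![u₀, v₀])
    (hu : Tendsto u atTop (nhds u₀)) (hv : Tendsto v atTop (nhds v₀))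
    (f : ℕ → E →L[ℝ] ℝ)
    (hmin : ∀ n (g : E →L[ℝ] ℝ), g (u n) = 1 → g (v n) = 0 → ‖f n‖ ≤ ‖g‖) :
    ∃ C : ℝ, ∀ n, ‖f n‖ ≤ C := by
  obtain ⟨F, G, hFa, hFb, hGa, hGb⟩ := aux_dual_pair hind₀
  -- determinant
  have hFu : Tendsto (fun n => F (u n)) atTop (nhds 1) := by
    simpa [hFa, Function.comp_def] using (F.continuous.tendsto u₀).comp hu
  have hFv : Tendsto (fun n => F (v n)) atTop (nhds 0) := by
    simpa [hFb, Function.comp_def] using (F.continuous.tendsto v₀).comp hv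
  have hGu : Tendsto (fun n => G (u n)) atTop (nhds 0) := by
    simpa [hGa, Function.comp_def] using (G.continuous.tendsto u₀).comp hu
  have hGv : Tendsto (fun n => G (v n)) atTop (nhds 1) := by
    simpa [hGb, Function.comp_def] using (G.continuous.tendsto v₀).comp hv
  have hdet : Tendsto (fun n => F (u n) * G (v n) - F (v n) * G (u n)) atTop (nhds 1) := by
    have := (hFu.mul hGv).sub (hFv.mul hGu)
    simpa using this
  have h1 : ∀ᶠ n in atTop, F (u n) * G (v n) - F (v n) * G (u n) ≥ 1/2 :=
    hdet.eventually (eventually_ge_nhds (by norm_num : (1:ℝ)/2 < 1))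
  have hGv' : Tendsto (fun n => |G (v n)|) atTop (nhds 1) := by simpa using hGv.abs
  have hFv' : Tendsto (fun n => |F (v n)|) atTop (nhds 0) := by simpa using hFv.abs
  have h2 : ∀ᶠ n in atTop, |G (v n)| ≤ 2 :=
    hGv'.eventually (eventually_le_nhds (by norm_num : (1:ℝ) < 2))
  have h3 : ∀ᶠ n in atTop, |F (v n)| ≤ 1 :=
    hFv'.eventually (eventually_le_nhds (by norm_num : (0:ℝ) < 1))
  obtain ⟨N, hN⟩ := (h1.and (h2.and h3)).exists_forall_of_atTop
  set C : ℝ := 2 * (2 * ‖F‖ + ‖G‖) with hC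
  have hbig : ∀ n ≥ N, ‖f n‖ ≤ C := by
    intro n hn
    obtain ⟨hd, hgv, hfv⟩ := hN n hn
    set d : ℝ := F (u n) * G (v n) - F (v n) * G (u n) with hdd
    have hd0 : d ≠ 0 := by positivity
    set g : E →L[ℝ] ℝ := d⁻¹ • (G (v n) • F - F (v n) • G) with hg
    have hg1 : g (u n) = 1 := by
      simp only [hg, ContinuousLinearMap.smul_apply, ContinuousLinearMap.sub_apply,
        smul_eq_mul]
      field_simp [hdd]
      ring
    have hg0 : g (v n) = 0 := by
      simp only [hg, ContinuousLinearMap.smul_apply, ContinuousLinearMap.sub_apply,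
        smul_eq_mul]
      field_simp [hdd]
      ring
    refine (hmin n g hg1 hg0).trans ?_
    have hnorm : ‖g‖ ≤ |d⁻¹| * (|G (v n)| * ‖F‖ + |F (v n)| * ‖G‖) := by
      have e1 : ‖g‖ = |d⁻¹| * ‖G (v n) • F - F (v n) • G‖ := by
        rw [hg]
        exact (norm_smul d⁻¹ (G (v n) • F - F (v n) • G)).trans (by rw [Real.norm_eq_abs])
      have e2 : ‖G (v n) • F‖ = |G (v n)| * ‖F‖ :=
        (norm_smul (G (v n)) F).trans (by rw [Real.norm_eq_abs])
      have e3 : ‖F (v n) • G‖ = |F (v n)| * ‖G‖ :=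
        (norm_smul (F (v n)) G).trans (by rw [Real.norm_eq_abs])
      rw [e1]
      gcongr
      refine (norm_sub_le _ _).trans ?_
      rw [e2, e3]
    refine hnorm.trans ?_
    have hdinv : |d⁻¹| ≤ 2 := by
      rw [abs_inv, abs_of_pos (by linarith : (0:ℝ) < d)]
      rw [inv_le_comm₀ (by linarith) (by norm_num)]
      linarith
    calc |d⁻¹| * (|G (v n)| * ‖F‖ + |F (v n)| * ‖G‖)
        ≤ 2 * (2 * ‖F‖ + 1 * ‖G‖) := by
          gcongr
      _ = C := by rw [hC]; ring
  -- finite patch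
  refine ⟨max C ((Finset.range (N+1)).sup' ⟨0, by simp⟩ fun n => ‖f n‖), fun n => ?_⟩
  rcases le_or_gt N n with h | h
  · exact le_max_of_le_left (hbig n h)
  · exact le_max_of_le_right (Finset.le_sup' (fun n => ‖f n‖) (Finset.mem_range.mpr (Nat.lt_succ_of_lt h)))


/-- **Lemma 4.4.** Let `(xₙ, yₙ, zₙ)` be triples of affinely independent points of a real
Banach space `E` converging to an affinely independent triple `(x, y, z)`. For each `n`, let
`λ_{xₙ}, λ_{yₙ} : E →L[ℝ] ℝ` satisfy `λ_{xₙ}(xₙ - zₙ) = 1 = λ_{yₙ}(yₙ - zₙ)` and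
`λ_{xₙ}(yₙ - zₙ) = 0 = λ_{yₙ}(xₙ - zₙ)`, each being a norm-minimal (Hahn–Banach) extension,
i.e. of norm at most that of any continuous functional agreeing with it on the span of
`xₙ - zₙ` and `yₙ - zₙ`. Then the dual norms `‖λ_{xₙ}‖` and `‖λ_{yₙ}‖` are uniformly
bounded. -/
theorem uniform_bound_for_hahn_banach_extensions
    {E : Type*} [NormedAddCommGroup E] [NormedSpace ℝ E] [CompleteSpace E]
    (x y z : ℕ → E) (x₀ y₀ z₀ : E)
    (hind : ∀ n, LinearIndependent ℝ ![x n - z n, y n - z n])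
    (hind₀ : LinearIndependent ℝ ![x₀ - z₀, y₀ - z₀])
    (hx : Tendsto x atTop (nhds x₀))
    (hy : Tendsto y atTop (nhds y₀))
    (hz : Tendsto z atTop (nhds z₀))
    (fx fy : ℕ → E →L[ℝ] ℝ)
    (hfx1 : ∀ n, fx n (x n - z n) = 1) (hfx0 : ∀ n, fx n (y n - z n) = 0)
    (hfy1 : ∀ n, fy n (y n - z n) = 1) (hfy0 : ∀ n, fy n (x n - z n) = 0)
    (hfxmin : ∀ n (g : E →L[ℝ] ℝ), g (x n - z n) = 1 → g (y n - z n) = 0 → ‖fx n‖ ≤ ‖g‖)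
    (hfymin : ∀ n (g : E →L[ℝ] ℝ), g (y n - z n) = 1 → g (x n - z n) = 0 → ‖fy n‖ ≤ ‖g‖) :
    (∃ C : ℝ, ∀ n, ‖fx n‖ ≤ C) ∧ (∃ C : ℝ, ∀ n, ‖fy n‖ ≤ C) := by
  have hu : Tendsto (fun n => x n - z n) atTop (nhds (x₀ - z₀)) := hx.sub hz
  have hv : Tendsto (fun n => y n - z n) atTop (nhds (y₀ - z₀)) := hy.sub hz
  have hind₀' : LinearIndependent ℝ ![y₀ - z₀, x₀ - z₀] := by
    rw [LinearIndependent.pair_iff] at hind₀ ⊢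
    intro s t hst
    obtain ⟨h1, h2⟩ := hind₀ t s (by rw [← hst]; abel)
    exact ⟨h2, h1⟩
  exact ⟨aux_key _ _ _ _ hind₀ hu hv fx hfxmin,
    aux_key _ _ _ _ hind₀' hv hu fy hfymin⟩
end

section
/- Let F be a closed convex set in a locally convex Hausdorff real topological vector space E, and let δ ∈ [0,1]. If A ⊆ F is closed, then the set A_δ is closed as well. -/
open MeasureTheory Set Pointwise
open scoped ENNReal NNReal

/-- The uniform probability measure on the segment `[a, b]`: the image of Lebesgue measure
on `[0,1]` under `t ↦ (1-t)a + tb`. -/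
noncomputable def segMeasure {E : Type*} [AddCommMonoid E] [Module ℝ E] [MeasurableSpace E]
    (a b : E) : Measure E :=
  Measure.map (fun t : ℝ => (1 - t) • a + t • b) (volume.restrict (Icc (0 : ℝ) 1))

/-- For `A ⊆ F`, the set `A_δ` of points `x ∈ A` such that `m_Δ(A) ≥ 1 - δ` for every
segment `Δ = [a,b] ⊆ F` containing `x`. -/
def subdil {E : Type*} [AddCommMonoid E] [Module ℝ E] [MeasurableSpace E]
    (F A : Set E) (δ : ℝ) : Set E :=
  {x ∈ A | ∀ a b : E, a ∈ F → b ∈ F → x ∈ segment ℝ a b →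
    ENNReal.ofReal (1 - δ) ≤ segMeasure a b A}

section Aux

variable {E : Type*} [AddCommGroup E] [Module ℝ E] [TopologicalSpace E] [IsTopologicalAddGroup E]
    [ContinuousSMul ℝ E] [MeasurableSpace E] [BorelSpace E]

lemma segMeasure_apply (a b : E) {A : Set E} (hA : MeasurableSet A) :
    segMeasure a b A = volume ((fun t : ℝ => (1 - t) • a + t • b) ⁻¹' A ∩ Icc (0:ℝ) 1) := by
  have hcont : Continuous (fun t : ℝ => (1 - t) • a + t • b) := by fun_prop
  rw [segMeasure, Measure.map_apply hcont.measurable hA,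
    Measure.restrict_apply (hA.preimage hcont.measurable)]

lemma segMeasure_comm (a b : E) : segMeasure a b = segMeasure b a := by
  have hmeas : Measurable (fun t : ℝ => 1 - t) := by fun_prop
  have hvol : Measure.map (fun t : ℝ => 1 - t) volume = volume := by
    have hcomp : (fun t : ℝ => 1 - t) = (fun t : ℝ => 1 + t) ∘ (fun t : ℝ => -t) := by
      ext t; simp [sub_eq_add_neg]
    rw [hcomp, ← Measure.map_map (by fun_prop) (by fun_prop)]
    have : Measure.map (fun t : ℝ => -t) volume = volume :=
      Measure.map_neg_eq_self (volume : Measure ℝ)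
    rw [this, map_add_left_eq_self]
  have h1 : Measure.map (fun t : ℝ => 1 - t) (volume.restrict (Icc (0:ℝ) 1))
      = volume.restrict (Icc (0:ℝ) 1) := by
    have hpre : (fun t : ℝ => 1 - t) ⁻¹' (Icc (0:ℝ) 1) = Icc 0 1 := by
      ext t
      simp only [mem_preimage, mem_Icc]
      constructor <;> (rintro ⟨h₁, h₂⟩; constructor <;> linarith)
    rw [← hpre, ← Measure.restrict_map hmeas measurableSet_Icc, hvol, hpre]
  have hc : Continuous (fun t : ℝ => (1 - t) • b + t • a) := by fun_prop
  rw [segMeasure, segMeasure, ← h1, Measure.map_map hc.measurable hmeas]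
  congr 1
  funext t
  simp only [Function.comp_apply]
  module

lemma segMeasure_ge_of_closure {F A : Set E} (hA : IsClosed A) (hAF : A ⊆ F) {δ : ℝ}
    (hδ : δ ∈ Icc (0:ℝ) 1)
    (x : E) (hx : x ∈ closure (subdil F A δ)) (a : E) (ha : a ∈ F) :
    ENNReal.ofReal (1 - δ) ≤ segMeasure a x A := by
  by_contra h
  push_neg at h
  set ψ : E × ℝ → E := fun p => (1 - p.2) • a + p.2 • p.1 with hψ
  have hψc : Continuous ψ := by fun_prop
  set S : Set ℝ := (fun t : ℝ => (1 - t) • a + t • x) ⁻¹' A ∩ Icc 0 1 with hS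
  have hSm : MeasurableSet S :=
    (hA.measurableSet.preimage (by fun_prop : Continuous
      (fun t : ℝ => (1 - t) • a + t • x)).measurable).inter measurableSet_Icc
  have hSe : segMeasure a x A = volume S := segMeasure_apply a x hA.measurableSet
  rw [hSe] at h
  have hIcc : volume (Icc (0:ℝ) 1) = 1 := by simp
  have hS1 : volume S ≤ 1 := by
    calc volume S ≤ volume (Icc (0:ℝ) 1) := measure_mono inter_subset_right
    _ = 1 := hIcc
  have hd : ENNReal.ofReal δ < volume (Icc (0:ℝ) 1 \ S) := by
    have hdiff : volume (Icc (0:ℝ) 1 \ S) = 1 - volume S := by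
      rw [measure_diff inter_subset_right hSm.nullMeasurableSet (hS1.trans_lt
        (by norm_num)).ne, hIcc]
    have hne : volume S ≠ ∞ := (hS1.trans_lt (by norm_num)).ne
    rw [hdiff, (ENNReal.cancel_of_ne hne).lt_tsub_iff_right]
    calc ENNReal.ofReal δ + volume S < ENNReal.ofReal δ + ENNReal.ofReal (1 - δ) := by
          exact ENNReal.add_lt_add_left ENNReal.ofReal_ne_top h
    _ = 1 := by rw [← ENNReal.ofReal_add hδ.1 (by linarith [hδ.2])]; norm_num
  obtain ⟨K, hKsub, hKc, hKv⟩ := (measurableSet_Icc.diff hSm).exists_lt_isCompact hd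
  have hWo : IsOpen (ψ ⁻¹' Aᶜ) := hA.isOpen_compl.preimage hψc
  have hsub : ({x} : Set E) ×ˢ K ⊆ ψ ⁻¹' Aᶜ := by
    rintro ⟨y, t⟩ ⟨hy, ht⟩
    simp only [mem_singleton_iff] at hy
    subst hy
    have hKt := hKsub ht
    intro hmem
    exact hKt.2 ⟨hmem, hKt.1⟩
  obtain ⟨U, V, hUo, hVo, hxU, hKV, hUV⟩ :=
    generalized_tube_lemma isCompact_singleton hKc hWo hsub
  obtain ⟨y, hyU, hysub⟩ := mem_closure_iff.mp hx U hUo (hxU rfl)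
  have hyA : y ∈ A := hysub.1
  have hge : ENNReal.ofReal (1 - δ) ≤ segMeasure a y A :=
    hysub.2 a y ha (hAF hyA) (right_mem_segment ℝ a y)
  set T : Set ℝ := (fun t : ℝ => (1 - t) • a + t • y) ⁻¹' A ∩ Icc 0 1 with hT
  have hTe : segMeasure a y A = volume T := segMeasure_apply a y hA.measurableSet
  have hdisj : Disjoint T K := by
    rw [Set.disjoint_left]
    intro t htT htK
    have hmem : (y, t) ∈ ψ ⁻¹' Aᶜ := hUV ⟨hyU, hKV htK⟩
    exact hmem htT.1
  have hsum : volume T + volume K ≤ 1 := by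
    rw [← measure_union hdisj hKc.measurableSet]
    calc volume (T ∪ K) ≤ volume (Icc (0:ℝ) 1) :=
          measure_mono (union_subset inter_subset_right (hKsub.trans diff_subset))
    _ = 1 := hIcc
  have hcontra : (1:ℝ≥0∞) < 1 := by
    calc (1:ℝ≥0∞) = ENNReal.ofReal (1 - δ) + ENNReal.ofReal δ := by
          rw [← ENNReal.ofReal_add (by linarith [hδ.2]) hδ.1]; norm_num
    _ < volume T + volume K :=
          ENNReal.add_lt_add_of_le_of_lt ENNReal.ofReal_ne_top (hTe ▸ hge) hKv
    _ ≤ 1 := hsum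
  exact absurd hcontra (lt_irrefl 1)

lemma segMeasure_ge_of_closure' {F A : Set E} (hA : IsClosed A) (hAF : A ⊆ F) {δ : ℝ}
    (hδ : δ ∈ Icc (0:ℝ) 1)
    (x : E) (hx : x ∈ closure (subdil F A δ)) (b : E) (hb : b ∈ F) :
    ENNReal.ofReal (1 - δ) ≤ segMeasure x b A := by
  rw [segMeasure_comm]
  exact segMeasure_ge_of_closure hA hAF hδ x hx b hb

end Aux

/-- **Lemma 5.1 a).** Let `F` be a closed convex set in a locally convex Hausdorff space
`E`, and `δ ∈ [0,1]`. If `A ⊆ F` is closed, then `A_δ` is closed as well. -/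
theorem subdil_isClosed
    {E : Type*} [AddCommGroup E] [Module ℝ E] [TopologicalSpace E] [IsTopologicalAddGroup E]
    [ContinuousSMul ℝ E] [LocallyConvexSpace ℝ E] [T2Space E]
    [MeasurableSpace E] [BorelSpace E]
    (F : Set E) (hF : IsClosed F) (hFc : Convex ℝ F)
    (A : Set E) (hAF : A ⊆ F) (hA : IsClosed A)
    (δ : ℝ) (hδ : δ ∈ Icc (0 : ℝ) 1) :
    IsClosed (subdil F A δ) := by
  apply isClosed_of_closure_subset
  intro x hx
  have hxA : x ∈ A := by
    have hsub : closure (subdil F A δ) ⊆ closure A := closure_mono (fun y hy => hy.1)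
    exact hA.closure_eq ▸ hsub hx
  refine ⟨hxA, ?_⟩
  intro a b ha hb hseg
  rw [segment_eq_image] at hseg
  obtain ⟨t₀, ht₀, hxt⟩ := hseg
  have hAm := hA.measurableSet
  rcases eq_or_lt_of_le ht₀.1 with h0 | h0
  · -- t₀ = 0 : x = a
    have hax : a = x := by rw [← hxt, ← h0]; simp
    rw [← hax] at hx
    exact segMeasure_ge_of_closure' hA hAF hδ a hx b hb
  rcases eq_or_lt_of_le ht₀.2 with h1 | h1
  · -- t₀ = 1 : x = b
    have hbx : b = x := by rw [← hxt, h1]; simp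
    rw [← hbx] at hx
    exact segMeasure_ge_of_closure hA hAF hδ b hx a ha
  -- 0 < t₀ < 1
  have h1' : (0:ℝ) < 1 - t₀ := by linarith
  have key1 : ENNReal.ofReal (1 - δ) ≤ segMeasure a x A :=
    segMeasure_ge_of_closure hA hAF hδ x hx a ha
  have key2 : ENNReal.ofReal (1 - δ) ≤ segMeasure x b A :=
    segMeasure_ge_of_closure' hA hAF hδ x hx b hb
  set P : Set ℝ := (fun s : ℝ => (1 - s) • a + s • b) ⁻¹' A with hP
  have hPm : MeasurableSet P :=
    hAm.preimage (by fun_prop : Continuous (fun s : ℝ => (1 - s) • a + s • b)).measurable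
  rw [segMeasure_apply a b hAm]
  -- piece 1
  have hfun1 : ∀ u : ℝ, (1 - t₀ * u) • a + (t₀ * u) • b = (1 - u) • a + u • x := by
    intro u; rw [← hxt]; module
  have hpre1 : (fun u : ℝ => t₀ * u) ⁻¹' (P ∩ Icc 0 t₀)
      = ((fun u : ℝ => (1 - u) • a + u • x) ⁻¹' A) ∩ Icc 0 1 := by
    ext u
    simp only [mem_preimage, mem_inter_iff, mem_Icc, hP, hfun1 u]
    constructor
    · rintro ⟨h₁, h₂, h₃⟩; exact ⟨h₁, by nlinarith, by nlinarith⟩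
    · rintro ⟨h₁, h₂, h₃⟩; exact ⟨h₁, by nlinarith, by nlinarith⟩
  have hv1 : volume (P ∩ Icc (0:ℝ) t₀) = ENNReal.ofReal t₀ * segMeasure a x A := by
    have hmap := Real.volume_preimage_mul_left (ne_of_gt h0) (P ∩ Icc 0 t₀)
    rw [hpre1] at hmap
    rw [segMeasure_apply a x hAm, hmap, abs_of_pos (inv_pos.mpr h0), ← mul_assoc,
      ← ENNReal.ofReal_mul h0.le, mul_inv_cancel₀ (ne_of_gt h0), ENNReal.ofReal_one, one_mul]
  -- piece 2
  have hfun2 : ∀ u : ℝ,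
      (1 - (t₀ + (1 - t₀) * u)) • a + (t₀ + (1 - t₀) * u) • b = (1 - u) • x + u • b := by
    intro u; rw [← hxt]; module
  have hpre2 : (fun u : ℝ => t₀ + (1 - t₀) * u) ⁻¹' (P ∩ Ioc t₀ 1)
      = ((fun u : ℝ => (1 - u) • x + u • b) ⁻¹' A) ∩ Ioc 0 1 := by
    ext u
    simp only [mem_preimage, mem_inter_iff, mem_Ioc, hP, hfun2 u]
    constructor
    · rintro ⟨h₁, h₂, h₃⟩; exact ⟨h₁, by nlinarith, by nlinarith⟩
    · rintro ⟨h₁, h₂, h₃⟩; exact ⟨h₁, by nlinarith, by nlinarith⟩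
  have hvpre : volume ((fun u : ℝ => t₀ + (1 - t₀) * u) ⁻¹' (P ∩ Ioc t₀ 1))
      = ENNReal.ofReal |(1 - t₀)⁻¹| * volume (P ∩ Ioc t₀ 1) := by
    have hcomp : (fun u : ℝ => t₀ + (1 - t₀) * u)
        = (fun v : ℝ => t₀ + v) ∘ (fun u : ℝ => (1 - t₀) * u) := rfl
    rw [hcomp, preimage_comp, Real.volume_preimage_mul_left (ne_of_gt h1'),
      measure_preimage_add]
  have hv2 : ENNReal.ofReal (1 - t₀) * segMeasure x b A ≤ volume (P ∩ Ioc t₀ 1) := by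
    have hle : volume (((fun u : ℝ => (1 - u) • x + u • b) ⁻¹' A) ∩ Icc 0 1)
        ≤ volume (((fun u : ℝ => (1 - u) • x + u • b) ⁻¹' A) ∩ Ioc 0 1) := by
      have hsub' : ((fun u : ℝ => (1 - u) • x + u • b) ⁻¹' A) ∩ Icc 0 1
          ⊆ (((fun u : ℝ => (1 - u) • x + u • b) ⁻¹' A) ∩ Ioc 0 1) ∪ {0} := by
        rintro u ⟨h₁, h₂⟩
        rcases eq_or_lt_of_le h₂.1 with h | h
        · right; simp [← h]
        · left; exact ⟨h₁, h, h₂.2⟩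
      calc volume (((fun u : ℝ => (1 - u) • x + u • b) ⁻¹' A) ∩ Icc 0 1)
          ≤ volume ((((fun u : ℝ => (1 - u) • x + u • b) ⁻¹' A) ∩ Ioc 0 1) ∪ {0}) :=
            measure_mono hsub'
        _ ≤ volume (((fun u : ℝ => (1 - u) • x + u • b) ⁻¹' A) ∩ Ioc 0 1)
              + volume ({0} : Set ℝ) := measure_union_le _ _
        _ = volume (((fun u : ℝ => (1 - u) • x + u • b) ⁻¹' A) ∩ Ioc 0 1) := by simp
    calc ENNReal.ofReal (1 - t₀) * segMeasure x b A
        = ENNReal.ofReal (1 - t₀)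
            * volume (((fun u : ℝ => (1 - u) • x + u • b) ⁻¹' A) ∩ Icc 0 1) := by
          rw [segMeasure_apply x b hAm]
      _ ≤ ENNReal.ofReal (1 - t₀)
            * volume (((fun u : ℝ => (1 - u) • x + u • b) ⁻¹' A) ∩ Ioc 0 1) :=
          mul_le_mul_right hle _
      _ = volume (P ∩ Ioc t₀ 1) := by
          rw [← hpre2, hvpre, abs_of_pos (inv_pos.mpr h1'), ← mul_assoc,
            ← ENNReal.ofReal_mul h1'.le, mul_inv_cancel₀ (ne_of_gt h1'),
            ENNReal.ofReal_one, one_mul]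
  have hdisj : Disjoint (P ∩ Icc (0:ℝ) t₀) (P ∩ Ioc t₀ 1) := by
    rw [Set.disjoint_left]
    rintro t ⟨-, ht1⟩ ⟨-, ht2⟩
    exact absurd ht1.2 (not_le.mpr ht2.1)
  calc ENNReal.ofReal (1 - δ)
      = ENNReal.ofReal t₀ * ENNReal.ofReal (1 - δ)
        + ENNReal.ofReal (1 - t₀) * ENNReal.ofReal (1 - δ) := by
        rw [← add_mul, ← ENNReal.ofReal_add h0.le h1'.le]
        norm_num
    _ ≤ ENNReal.ofReal t₀ * segMeasure a x A + ENNReal.ofReal (1 - t₀) * segMeasure x b A :=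
        add_le_add (mul_le_mul_right key1 _) (mul_le_mul_right key2 _)
    _ ≤ volume (P ∩ Icc (0:ℝ) t₀) + volume (P ∩ Ioc t₀ 1) :=
        add_le_add (le_of_eq hv1.symm) hv2
    _ = volume ((P ∩ Icc (0:ℝ) t₀) ∪ (P ∩ Ioc t₀ 1)) :=
        (measure_union hdisj (hPm.inter measurableSet_Ioc)).symm
    _ ≤ volume (P ∩ Icc (0:ℝ) 1) := by
        apply measure_mono
        apply union_subset
        · exact inter_subset_inter_right _ (Icc_subset_Icc le_rfl h1.le)
        · exact inter_subset_inter_right _ (Ioc_subset_Icc_self.trans (Icc_subset_Icc ht₀.1 le_rfl))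
end

section
/- Let F be a convex closed set in a locally convex Hausdorff real topological vector space E, and let T be a continuous linear map from E to another locally convex Hausdorff real topological vector space E_1. For any δ ∈ [0,1) and any Borel set C ⊆ T(F), one has (T^{-1}(C) ∩ F)^δ = T^{-1}(C^δ) ∩ F, where the dilation B^δ on the left is taken with respect to F and the dilation C^δ on the right is taken with respect to the image T(F). -/
open MeasureTheory Set Pointwise
open scoped ENNReal NNReal

/-- For `B ⊆ F`, the dilation `B^δ = {x ∈ F : m_{[x,y]}(B) > δ for some y ∈ F}`. -/
def dil {E : Type*} [AddCommMonoid E] [Module ℝ E] [MeasurableSpace E]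
    (F B : Set E) (δ : ℝ) : Set E :=
  {x ∈ F | ∃ y ∈ F, ENNReal.ofReal δ < segMeasure x y B}


lemma segMeasure_key
    {E : Type*} [AddCommGroup E] [Module ℝ E] [TopologicalSpace E] [IsTopologicalAddGroup E]
    [ContinuousSMul ℝ E] [MeasurableSpace E] [BorelSpace E]
    {E₁ : Type*} [AddCommGroup E₁] [Module ℝ E₁] [TopologicalSpace E₁]
    [IsTopologicalAddGroup E₁] [ContinuousSMul ℝ E₁]
    [MeasurableSpace E₁] [BorelSpace E₁]
    (T : E →L[ℝ] E₁)
    {F : Set E} (hF : IsClosed F) (hFc : Convex ℝ F)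
    {C : Set E₁} (hC : MeasurableSet C)
    {x y : E} (hx : x ∈ F) (hy : y ∈ F) :
    Measure.map (fun t : ℝ => (1 - t) • x + t • y) (volume.restrict (Icc (0 : ℝ) 1))
        (T ⁻¹' C ∩ F)
      = Measure.map (fun t : ℝ => (1 - t) • (T x) + t • (T y))
          (volume.restrict (Icc (0 : ℝ) 1)) C := by
  have hf : Measurable (fun t : ℝ => (1 - t) • x + t • y) :=
    (((continuous_const.sub continuous_id).smul continuous_const).add
      (continuous_id.smul continuous_const)).measurable
  have hg : Measurable (fun t : ℝ => (1 - t) • (T x) + t • (T y)) :=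
    (((continuous_const.sub continuous_id).smul continuous_const).add
      (continuous_id.smul continuous_const)).measurable
  rw [Measure.map_apply hf ((hC.preimage T.continuous.measurable).inter hF.measurableSet),
      Measure.map_apply hg hC,
      Measure.restrict_apply' measurableSet_Icc, Measure.restrict_apply' measurableSet_Icc]
  congr 1
  ext t
  simp only [mem_inter_iff, mem_preimage, mem_Icc]
  constructor
  · rintro ⟨⟨hTC, -⟩, ht⟩
    refine ⟨?_, ht⟩
    simpa [map_add, _root_.map_smul] using hTC
  · rintro ⟨hTC, ht⟩
    refine ⟨⟨by simpa [map_add, _root_.map_smul] using hTC, ?_⟩, ht⟩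
    exact hFc hx hy (by linarith [ht.2]) ht.1 (by ring)

/-- **Lemma 5.3.** Let `F` be a convex closed set in a locally convex Hausdorff space `E`,
and `T : E → E₁` a continuous linear map into another locally convex Hausdorff space. For
any `δ ∈ [0,1)` and any Borel set `C ⊆ T(F)`, one has
`(T⁻¹(C) ∩ F)^δ = T⁻¹(C^δ) ∩ F`, where the left dilation is taken with respect to `F` and
the right one with respect to `T(F)`. -/
theorem dil_preimage_of_continuous_linear_map
    {E : Type*} [AddCommGroup E] [Module ℝ E] [TopologicalSpace E] [IsTopologicalAddGroup E]
    [ContinuousSMul ℝ E] [LocallyConvexSpace ℝ E] [T2Space E]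
    [MeasurableSpace E] [BorelSpace E]
    {E₁ : Type*} [AddCommGroup E₁] [Module ℝ E₁] [TopologicalSpace E₁]
    [IsTopologicalAddGroup E₁] [ContinuousSMul ℝ E₁] [LocallyConvexSpace ℝ E₁] [T2Space E₁]
    [MeasurableSpace E₁] [BorelSpace E₁]
    (T : E →L[ℝ] E₁)
    (F : Set E) (hF : IsClosed F) (hFc : Convex ℝ F)
    (C : Set E₁) (hC : MeasurableSet C) (hCF : C ⊆ T '' F)
    (δ : ℝ) (hδ : δ ∈ Ico (0 : ℝ) 1) :
    dil F (T ⁻¹' C ∩ F) δ = T ⁻¹' (dil (T '' F) C δ) ∩ F := by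
  ext x
  simp only [dil, mem_setOf_eq, mem_inter_iff, mem_preimage, segMeasure]
  constructor
  · rintro ⟨hx, y, hy, hlt⟩
    rw [segMeasure_key T hF hFc hC hx hy] at hlt
    exact ⟨⟨⟨x, hx, rfl⟩, T y, ⟨y, hy, rfl⟩, hlt⟩, hx⟩
  · rintro ⟨⟨-, z, ⟨y, hy, rfl⟩, hlt⟩, hx⟩
    rw [← segMeasure_key T hF hFc hC hx hy] at hlt
    exact ⟨hx, y, hy, hlt⟩
end
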